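/- Suppose random variables (S_n) and (L_n) on probability spaces with events H_n satisfy: (a) E[S_n · 1_{H_n}] ≤ ε_n · a_n with ε_n → 0; (b) (1/C₁) a_n ≤ E[L_n · 1_{H_n}] ≤ C₂ a_n for all n with positive constants C₁, C₂; (c) for every δ > 0, lim_{ε↓0} limsup_n P(0 < L_n ≤ ε a_n) = 0; (d) L_n > 0 on H_n, S_n ≤ L_n on H_n, and inf_n P(H_n) > 0. Then S_n / L_n → 0 in probability conditionally on H_n, i.e., for every δ > 0, P(S_n/L_n > δ | H_n) → 0. -/

import Mathlib

open MeasureTheory Filter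
open scoped ENNReal

/-- Deduction of convergence in probability: if (a) `E[S_n 1_{H_n}] ≤ ε_n a_n` with
`ε_n → 0`; (b) `(1/C₁) a_n ≤ E[L_n 1_{H_n}] ≤ C₂ a_n`; (c) the lower-tail condition
`lim_{ε↓0} limsup_n P(0 < L_n ≤ ε a_n) = 0`; (d) on `H_n`, `0 < L_n` and
`0 ≤ S_n ≤ L_n`, and `inf_n P(H_n) > 0`; then `S_n/L_n → 0` in probability
conditionally on `H_n`. -/
theorem stmt9 (Ω : ℕ → Type*) [∀ n, MeasurableSpace (Ω n)]
    (P : ∀ n, Measure (Ω n)) [∀ n, IsProbabilityMeasure (P n)]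
    (S L : ∀ n, Ω n → ℝ) (H : ∀ n, Set (Ω n))
    (hHm : ∀ n, MeasurableSet (H n))
    (hSm : ∀ n, Measurable (S n)) (hLm : ∀ n, Measurable (L n))
    (a : ℕ → ℝ) (hapos : ∀ n, 0 < a n)
    (εseq : ℕ → ℝ) (hεnn : ∀ n, 0 ≤ εseq n)
    (hε : Tendsto εseq atTop (nhds 0))
    (hSint : ∀ n, Integrable ((H n).indicator (S n)) (P n))
    (hLint : ∀ n, Integrable ((H n).indicator (L n)) (P n))
    (ha : ∀ n, ∫ ω, (H n).indicator (S n) ω ∂(P n) ≤ εseq n * a n)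
    (C₁ C₂ : ℝ) (hC₁ : 0 < C₁) (hC₂ : 0 < C₂)
    (hb : ∀ n, (1 / C₁) * a n ≤ ∫ ω, (H n).indicator (L n) ω ∂(P n) ∧
      ∫ ω, (H n).indicator (L n) ω ∂(P n) ≤ C₂ * a n)
    (hSL : ∀ n, ∀ ω ∈ H n, 0 < L n ω ∧ 0 ≤ S n ω ∧ S n ω ≤ L n ω)
    (hc : Tendsto
      (fun ε : ℝ => limsup (fun n => P n {ω | 0 < L n ω ∧ L n ω ≤ ε * a n}) atTop)
      (nhdsWithin 0 (Set.Ioi 0)) (nhds 0))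
    (h0 : ℝ≥0∞) (hh0 : 0 < h0) (hinf : ∀ n, h0 ≤ P n (H n)) :
    ∀ δ : ℝ, 0 < δ →
      Tendsto (fun n => ProbabilityTheory.cond (P n) (H n)
        {ω | δ < S n ω / L n ω}) atTop (nhds 0) := by
  intro δ hδ
  set f : ℕ → ℝ≥0∞ := fun n => P n (H n ∩ {ω | δ < S n ω / L n ω}) with hf
  -- Markov bound for the "S large" part, for any ε > 0
  have markov : ∀ ε : ℝ, 0 < ε → ∀ n,
      P n {ω | ω ∈ H n ∧ δ * ε * a n < S n ω} ≤ ENNReal.ofReal (εseq n / (δ * ε)) := by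
    intro ε hε' n
    set c : ℝ := δ * ε * a n with hc'
    have hcpos : 0 < c := by have := hapos n; rw [hc']; positivity
    have hnonneg : 0 ≤ᵐ[P n] (H n).indicator (S n) := by
      filter_upwards with ω
      by_cases hω : ω ∈ H n
      · simpa [Set.indicator_of_mem hω] using (hSL n ω hω).2.1
      · simp [Set.indicator_of_notMem hω]
    have hmark := mul_meas_ge_le_integral_of_nonneg hnonneg (hSint n) c
    have hsub : {ω | ω ∈ H n ∧ δ * ε * a n < S n ω}
        ⊆ {ω | c ≤ (H n).indicator (S n) ω} := by
      intro ω hω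
      simpa [Set.indicator_of_mem hω.1] using hω.2.le
    have hfin : P n {ω | c ≤ (H n).indicator (S n) ω} ≠ ⊤ := measure_ne_top _ _
    have h1 : (P n {ω | c ≤ (H n).indicator (S n) ω}).toReal ≤ εseq n / (δ * ε) := by
      have h2 : c * (P n {ω | c ≤ (H n).indicator (S n) ω}).toReal ≤ εseq n * a n :=
        hmark.trans (ha n)
      rw [hc'] at h2
      have hδε : 0 < δ * ε := by positivity
      rw [le_div_iff₀ hδε]
      nlinarith [(hapos n), ENNReal.toReal_nonneg
        (a := P n {ω | c ≤ (H n).indicator (S n) ω}), hεnn n]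
    calc P n {ω | ω ∈ H n ∧ δ * ε * a n < S n ω}
        ≤ P n {ω | c ≤ (H n).indicator (S n) ω} := measure_mono hsub
      _ = ENNReal.ofReal (P n {ω | c ≤ (H n).indicator (S n) ω}).toReal := by
          rw [ENNReal.ofReal_toReal hfin]
      _ ≤ ENNReal.ofReal (εseq n / (δ * ε)) := ENNReal.ofReal_le_ofReal h1
  -- the Markov part tends to 0
  have markov_lim : ∀ ε : ℝ, 0 < ε →
      Tendsto (fun n => P n {ω | ω ∈ H n ∧ δ * ε * a n < S n ω}) atTop (nhds 0) := by
    intro ε hε'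
    have h1 : Tendsto (fun n => ENNReal.ofReal (εseq n / (δ * ε))) atTop (nhds 0) := by
      have h2 : Tendsto (fun n => εseq n / (δ * ε)) atTop (nhds 0) := by
        simpa using hε.div_const (δ * ε)
      simpa using ENNReal.tendsto_ofReal h2
    exact tendsto_of_tendsto_of_tendsto_of_le_of_le tendsto_const_nhds h1
      (fun n => zero_le) (fun n => markov ε hε' n)
  -- inclusion
  have hincl : ∀ ε : ℝ, 0 < ε → ∀ n,
      H n ∩ {ω | δ < S n ω / L n ω} ⊆
        {ω | 0 < L n ω ∧ L n ω ≤ ε * a n} ∪ {ω | ω ∈ H n ∧ δ * ε * a n < S n ω} := by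
    intro ε hε' n ω hω
    obtain ⟨hH, hδω⟩ := hω
    obtain ⟨hLpos, hSnn, hSle⟩ := hSL n ω hH
    by_cases hcase : L n ω ≤ ε * a n
    · exact Or.inl ⟨hLpos, hcase⟩
    · refine Or.inr ⟨hH, ?_⟩
      have h1 : δ * L n ω < S n ω := (lt_div_iff₀ hLpos).mp hδω
      have h2 : δ * (ε * a n) < δ * L n ω :=
        mul_lt_mul_of_pos_left (not_le.mp hcase) hδ
      nlinarith
  -- limsup f = 0
  have hlimsup : limsup f atTop = 0 := by
    refine le_antisymm ?_ (zero_le)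
    refine ENNReal.le_of_forall_pos_le_add fun η hη _ => ?_
    rw [zero_add]
    have hη2 : (0 : ℝ≥0∞) < (η : ℝ≥0∞) / 2 := by
      simp [ENNReal.div_pos_iff, hη.ne']
    -- choose ε with limsup of the lower-tail part < η/2
    have hev : ∀ᶠ ε in nhdsWithin (0:ℝ) (Set.Ioi 0),
        limsup (fun n => P n {ω | 0 < L n ω ∧ L n ω ≤ ε * a n}) atTop < (η : ℝ≥0∞) / 2 :=
      hc.eventually_lt_const hη2
    obtain ⟨ε, hgε, hεpos⟩ := (hev.and self_mem_nhdsWithin).exists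
    have hεpos' : (0:ℝ) < ε := hεpos
    -- eventually the Markov part is < η/2, hence f n ≤ g1 n + η/2 eventually
    have hev2 : ∀ᶠ n in atTop,
        P n {ω | ω ∈ H n ∧ δ * ε * a n < S n ω} ≤ (η : ℝ≥0∞) / 2 :=
      (markov_lim ε hεpos').eventually_le_const hη2
    have hfle : ∀ᶠ n in atTop,
        f n ≤ P n {ω | 0 < L n ω ∧ L n ω ≤ ε * a n} + (η : ℝ≥0∞) / 2 := by
      filter_upwards [hev2] with n hn
      calc f n ≤ P n ({ω | 0 < L n ω ∧ L n ω ≤ ε * a n}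
            ∪ {ω | ω ∈ H n ∧ δ * ε * a n < S n ω}) :=
          measure_mono (hincl ε hεpos' n)
        _ ≤ P n {ω | 0 < L n ω ∧ L n ω ≤ ε * a n}
            + P n {ω | ω ∈ H n ∧ δ * ε * a n < S n ω} := measure_union_le _ _
        _ ≤ P n {ω | 0 < L n ω ∧ L n ω ≤ ε * a n} + (η : ℝ≥0∞) / 2 := by
            exact add_le_add_right hn _
    calc limsup f atTop
        ≤ limsup (fun n => P n {ω | 0 < L n ω ∧ L n ω ≤ ε * a n} + (η : ℝ≥0∞) / 2) atTop :=
          limsup_le_limsup hfle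
      _ = limsup (fun n => P n {ω | 0 < L n ω ∧ L n ω ≤ ε * a n}) atTop + (η : ℝ≥0∞) / 2 :=
          limsup_add_const atTop _ _ (by isBoundedDefault) (by isBoundedDefault)
      _ ≤ (η : ℝ≥0∞) / 2 + (η : ℝ≥0∞) / 2 := add_le_add_left hgε.le _
      _ = (η : ℝ≥0∞) := ENNReal.add_halves _
  have hliminf : liminf f atTop = 0 :=
    le_antisymm (hlimsup ▸ liminf_le_limsup) (zero_le)
  have hfto : Tendsto f atTop (nhds 0) :=
    tendsto_of_liminf_eq_limsup hliminf hlimsup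
  -- conclude for the conditional probability
  have hupper : ∀ n, ProbabilityTheory.cond (P n) (H n) {ω | δ < S n ω / L n ω}
      ≤ h0⁻¹ * f n := by
    intro n
    rw [ProbabilityTheory.cond_apply (hHm n)]
    exact mul_le_mul' (ENNReal.inv_le_inv' (hinf n)) le_rfl
  have hto : Tendsto (fun n => h0⁻¹ * f n) atTop (nhds 0) := by
    have := ENNReal.Tendsto.const_mul hfto (Or.inr (ENNReal.inv_ne_top.2 hh0.ne'))
    simpa using this
  exact tendsto_of_tendsto_of_tendsto_of_le_of_le tendsto_const_nhds hto
    (fun n => zero_le) hupper
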